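/- Let F be a k-uniform odd-sunflower-free antichain of subsets of an n-element set, and suppose there exists an odd-sunflower-free antichain of nonempty subsets of an m-element set with b members. Then there exists an odd-sunflower-free antichain of nonempty subsets of an (n·m)-element set with |F|·b^k members. In particular, for every odd n ≥ 3, there exists an odd-sunflower-free antichain of nonempty subsets of an (n·m)-element set with n·b^{n−1} members. -/

import Mathlib

variable {α : Type*}

/-- A family of at least two nonempty finite sets is an *odd-sunflower* if every element of
the union of its members is contained in an odd number of its members. -/
def IsOddSunflower [DecidableEq α] (F : Finset (Finset α)) : Prop :=
  2 ≤ F.card ∧ (∀ S ∈ F, S.Nonempty) ∧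
    ∀ x ∈ F.sup id, Odd (F.filter (fun S => x ∈ S)).card

/-- A family is *odd-sunflower-free* if no subfamily of it (necessarily with at least two
members) is an odd-sunflower. -/
def OddSunflowerFree [DecidableEq α] (F : Finset (Finset α)) : Prop :=
  ∀ H ⊆ F, ¬ IsOddSunflower H

/-- A nonempty family of nonempty finite sets is an *even-sunflower* if every element of
the union of its members is contained in an even number of its members. -/
def IsEvenSunflower [DecidableEq α] (F : Finset (Finset α)) : Prop :=
  F.Nonempty ∧ (∀ S ∈ F, S.Nonempty) ∧
    ∀ x ∈ F.sup id, Even (F.filter (fun S => x ∈ S)).card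

/-- A family is *even-sunflower-free* if no nonempty subfamily of it is an even-sunflower. -/
def EvenSunflowerFree [DecidableEq α] (F : Finset (Finset α)) : Prop :=
  ∀ H ⊆ F, ¬ IsEvenSunflower H

/-- A family of at least three sets is a *sunflower* if every element is contained either
in all of the sets or in at most one of them. -/
def IsSunflower [DecidableEq α] (H : Finset (Finset α)) : Prop :=
  3 ≤ H.card ∧ ∀ x : α, (∀ S ∈ H, x ∈ S) ∨ (H.filter (fun S => x ∈ S)).card ≤ 1

/-- A family of sets is an *antichain* if none of its members is a proper subset of another. -/
def IsAntichainFamily (F : Finset (Finset α)) : Prop :=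
  ∀ S ∈ F, ∀ T ∈ F, S ⊆ T → S = T

/-- An odd-sunflower is *minimal* if no proper subfamily of it is an odd-sunflower. -/
def IsMinimalOddSunflower [DecidableEq α] (F : Finset (Finset α)) : Prop :=
  IsOddSunflower F ∧ ∀ H ⊂ F, ¬ IsOddSunflower H

/-- `Cfam n` is the family of all `(n-1)`-element subsets of `{1, …, n}`. -/
def Cfam (n : ℕ) : Finset (Finset ℕ) := (Finset.Icc 1 n).powersetCard (n - 1)

/-- `CfamPlus n` is `Cfam n` together with the full set `{1, …, n}`. -/
def CfamPlus (n : ℕ) : Finset (Finset ℕ) := insert (Finset.Icc 1 n) (Cfam n)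

/-- A multifamily (multiset) of at least two nonempty finite sets is an *odd-sunflower* if
every element of the union of its members has odd degree (counted with multiplicity). -/
def MultiOddSunflower [DecidableEq α] (H : Multiset (Finset α)) : Prop :=
  2 ≤ Multiset.card H ∧ (∀ S ∈ H, S.Nonempty) ∧
    ∀ x ∈ H.sup, Odd (H.countP (fun S => x ∈ S))

/-- The wreath product of two families. -/
def Wreath {β : Type*} [DecidableEq α] [DecidableEq β]
    (F : Set (Finset α)) (G : Set (Finset β)) : Set (Finset (α × β)) :=
  {S | ∃ F₀ ∈ F, ∃ g : α → Finset β, (∀ i ∈ F₀, g i ∈ G) ∧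
    S = F₀.biUnion (fun i => ({i} : Finset α) ×ˢ g i)}

/-- Odd-sunflower-freeness for set-indexed families. -/
def OddSunflowerFreeS [DecidableEq α] (F : Set (Finset α)) : Prop :=
  ∀ H : Finset (Finset α), ↑H ⊆ F → ¬ IsOddSunflower H

/-- Antichain condition for set-indexed families. -/
def IsAntichainFamilyS (F : Set (Finset α)) : Prop :=
  ∀ S ∈ F, ∀ T ∈ F, S ⊆ T → S = T


namespace WC
open Finset
open scoped Classical

/-! ### coding of pairs -/

def e (m i j : ℕ) : ℕ := (i - 1) * m + j
def d1 (m v : ℕ) : ℕ := (v - 1) / m + 1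
def d2 (m v : ℕ) : ℕ := v - (d1 m v - 1) * m

lemma d1_e {m i j : ℕ} (hi : 1 ≤ i) (hj1 : 1 ≤ j) (hj2 : j ≤ m) : d1 m (e m i j) = i := by
  have hm : 0 < m := lt_of_lt_of_le hj1 hj2
  unfold d1 e
  have h : (i - 1) * m + j - 1 = (j - 1) + (i - 1) * m := by omega
  rw [h, Nat.add_mul_div_right _ _ hm, Nat.div_eq_of_lt (by omega)]
  omega

lemma d2_e {m i j : ℕ} (hi : 1 ≤ i) (hj1 : 1 ≤ j) (hj2 : j ≤ m) : d2 m (e m i j) = j := by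
  unfold d2
  rw [d1_e hi hj1 hj2]
  unfold e
  omega

lemma e_mem_Icc {n m i j : ℕ} (hi : i ∈ Icc 1 n) (hj : j ∈ Icc 1 m) :
    e m i j ∈ Icc 1 (n * m) := by
  simp only [mem_Icc] at *
  constructor
  · unfold e; omega
  · have h1 : (i - 1) * m ≤ (n - 1) * m := Nat.mul_le_mul_right m (by omega)
    have h2 : (n - 1) * m = n * m - m := by rw [Nat.sub_one_mul]
    have h3 : m ≤ n * m := Nat.le_mul_of_pos_left m (by omega)
    unfold e; omega

/-! ### the wreath construction -/

noncomputable def Funs (G : Finset (Finset ℕ)) (S : Finset ℕ) : Finset (ℕ → Finset ℕ) :=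
  (S.pi (fun _ => G)).image (fun g i => if h : i ∈ S then g i h else ∅)

def build (m : ℕ) (S : Finset ℕ) (f : ℕ → Finset ℕ) : Finset ℕ :=
  S.biUnion (fun i => (f i).image (e m i))

noncomputable def Kfam (m : ℕ) (F G : Finset (Finset ℕ)) : Finset (Finset ℕ) :=
  F.biUnion (fun S => (Funs G S).image (build m S))

lemma mem_Funs {G : Finset (Finset ℕ)} {S : Finset ℕ} {f : ℕ → Finset ℕ} :
    f ∈ Funs G S ↔ (∀ i ∈ S, f i ∈ G) ∧ ∀ i ∉ S, f i = ∅ := by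
  simp only [Funs, mem_image, mem_pi]
  constructor
  · rintro ⟨g, hg, rfl⟩
    refine ⟨fun i hi => ?_, fun i hi => ?_⟩
    · simp only [dif_pos hi]; exact hg i hi
    · simp only [dif_neg hi]
  · rintro ⟨h1, h2⟩
    refine ⟨fun i _ => f i, fun i hi => h1 i hi, ?_⟩
    funext i
    by_cases h : i ∈ S
    · simp [dif_pos h]
    · simp [dif_neg h, h2 i h]

lemma card_Funs (G : Finset (Finset ℕ)) (S : Finset ℕ) :
    (Funs G S).card = G.card ^ S.card := by
  rw [Funs, card_image_of_injOn, card_pi, prod_const]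
  intro g hg g' hg' h
  funext i hi
  have h2 := congrFun h i
  simpa only [dif_pos hi] using h2

lemma mem_build {m : ℕ} {S : Finset ℕ} {f : ℕ → Finset ℕ} {v : ℕ}
    (hS : ∀ i ∈ S, 1 ≤ i) (hf : ∀ i ∈ S, f i ⊆ Icc 1 m) :
    v ∈ build m S f ↔ d1 m v ∈ S ∧ d2 m v ∈ f (d1 m v) := by
  constructor
  · intro hv
    simp only [build, mem_biUnion, mem_image] at hv
    obtain ⟨i, hi, j, hj, rfl⟩ := hv
    have hj' := hf i hi hj
    simp only [mem_Icc] at hj'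
    rw [d1_e (hS i hi) hj'.1 hj'.2, d2_e (hS i hi) hj'.1 hj'.2]
    exact ⟨hi, hj⟩
  · rintro ⟨h1, h2⟩
    simp only [build, mem_biUnion, mem_image]
    refine ⟨d1 m v, h1, d2 m v, h2, ?_⟩
    have hb := hf _ h1 h2
    simp only [mem_Icc] at hb
    have hle : (d1 m v - 1) * m ≤ v - 1 := by
      unfold d1
      simpa using Nat.div_mul_le_self (v - 1) m
    unfold e d2 at *
    omega

lemma build_subset {n m : ℕ} {S : Finset ℕ} {f : ℕ → Finset ℕ}
    (hS : S ⊆ Icc 1 n) (hf : ∀ i ∈ S, f i ⊆ Icc 1 m) :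
    build m S f ⊆ Icc 1 (n * m) := by
  intro v hv
  simp only [build, mem_biUnion, mem_image] at hv
  obtain ⟨i, hi, j, hj, rfl⟩ := hv
  exact e_mem_Icc (hS hi) (hf i hi hj)

lemma build_le {m : ℕ} {S S' : Finset ℕ} {f f' : ℕ → Finset ℕ}
    (hS : ∀ i ∈ S, 1 ≤ i) (hf : ∀ i ∈ S, f i ⊆ Icc 1 m)
    (hS' : ∀ i ∈ S', 1 ≤ i) (hf' : ∀ i ∈ S', f' i ⊆ Icc 1 m)
    (hne : ∀ i ∈ S, (f i).Nonempty)
    (h : build m S f ⊆ build m S' f') :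
    S ⊆ S' ∧ ∀ i ∈ S, f i ⊆ f' i := by
  have key : ∀ i ∈ S, ∀ j ∈ f i, i ∈ S' ∧ j ∈ f' i := by
    intro i hi j hj
    have hv : e m i j ∈ build m S f := by
      simp only [build, mem_biUnion, mem_image]
      exact ⟨i, hi, j, hj, rfl⟩
    have hv' := (mem_build hS' hf').mp (h hv)
    have hjb := hf i hi hj
    simp only [mem_Icc] at hjb
    rwa [d1_e (hS i hi) hjb.1 hjb.2, d2_e (hS i hi) hjb.1 hjb.2] at hv'
  constructor
  · intro i hi
    obtain ⟨j, hj⟩ := hne i hi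
    exact (key i hi j hj).1
  · intro i hi j hj
    exact (key i hi j hj).2

lemma mem_Kfam {m : ℕ} {F G : Finset (Finset ℕ)} {X : Finset ℕ} :
    X ∈ Kfam m F G ↔ ∃ S ∈ F, ∃ f ∈ Funs G S, X = build m S f := by
  simp only [Kfam, mem_biUnion, mem_image]
  constructor
  · rintro ⟨S, hS, f, hf, rfl⟩; exact ⟨S, hS, f, hf, rfl⟩
  · rintro ⟨S, hS, f, hf, rfl⟩; exact ⟨S, hS, f, hf, rfl⟩


variable {n m : ℕ} {F G : Finset (Finset ℕ)}

lemma build_inj {S S' : Finset ℕ} {f f' : ℕ → Finset ℕ}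
    (hS : S ⊆ Icc 1 n) (hS' : S' ⊆ Icc 1 n)
    (hGne : ∀ T ∈ G, T.Nonempty) (hGb : ∀ T ∈ G, T ⊆ Icc 1 m)
    (hf : f ∈ Funs G S) (hf' : f' ∈ Funs G S')
    (h : build m S f = build m S' f') : S = S' ∧ f = f' := by
  obtain ⟨hfG, hf0⟩ := mem_Funs.mp hf
  obtain ⟨hfG', hf0'⟩ := mem_Funs.mp hf'
  have hS1 : ∀ i ∈ S, 1 ≤ i := fun i hi => (mem_Icc.mp (hS hi)).1
  have hS1' : ∀ i ∈ S', 1 ≤ i := fun i hi => (mem_Icc.mp (hS' hi)).1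
  have hfb : ∀ i ∈ S, f i ⊆ Icc 1 m := fun i hi => hGb _ (hfG i hi)
  have hfb' : ∀ i ∈ S', f' i ⊆ Icc 1 m := fun i hi => hGb _ (hfG' i hi)
  have h1 := build_le hS1 hfb hS1' hfb' (fun i hi => hGne _ (hfG i hi)) (fun v hv => h ▸ hv)
  have h2 := build_le hS1' hfb' hS1 hfb (fun i hi => hGne _ (hfG' i hi)) (fun v hv => h.symm ▸ hv)
  have hSS : S = S' := Subset.antisymm h1.1 h2.1
  subst hSS
  refine ⟨rfl, funext fun i => ?_⟩
  by_cases hi : i ∈ S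
  · exact Subset.antisymm (h1.2 i hi) (h2.2 i hi)
  · rw [hf0 i hi, hf0' i hi]

lemma card_Kfam (hF : ∀ S ∈ F, S ⊆ Icc 1 n) (hGne : ∀ T ∈ G, T.Nonempty)
    (hGb : ∀ T ∈ G, T ⊆ Icc 1 m) :
    (Kfam m F G).card = ∑ S ∈ F, G.card ^ S.card := by
  rw [Kfam, card_biUnion]
  · refine sum_congr rfl fun S hS => ?_
    rw [card_image_of_injOn, card_Funs]
    intro f hf f' hf' h
    exact (build_inj (hF _ hS) (hF _ hS) hGne hGb hf hf' h).2
  · intro S hS S' hS' hne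
    rw [Function.onFun, disjoint_left]
    rintro X hX hX'
    obtain ⟨f, hf, rfl⟩ := mem_image.mp hX
    obtain ⟨f', hf', h⟩ := mem_image.mp hX'
    exact hne (build_inj (hF _ hS) (hF _ hS') hGne hGb hf hf' h.symm).1

lemma props_Kfam (hF : ∀ S ∈ F, S.Nonempty ∧ S ⊆ Icc 1 n)
    (hG : ∀ T ∈ G, T.Nonempty ∧ T ⊆ Icc 1 m) :
    ∀ X ∈ Kfam m F G, X.Nonempty ∧ X ⊆ Icc 1 (n * m) := by
  intro X hX
  obtain ⟨S, hS, f, hf, rfl⟩ := mem_Kfam.mp hX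
  obtain ⟨hfG, -⟩ := mem_Funs.mp hf
  constructor
  · obtain ⟨i, hi⟩ := (hF _ hS).1
    obtain ⟨j, hj⟩ := (hG _ (hfG i hi)).1
    exact ⟨e m i j, by
      simp only [build, mem_biUnion, mem_image]
      exact ⟨i, hi, j, hj, rfl⟩⟩
  · exact build_subset (hF _ hS).2 (fun i hi => (hG _ (hfG i hi)).2)

lemma antichain_Kfam (hF : ∀ S ∈ F, S ⊆ Icc 1 n)
    (hG : ∀ T ∈ G, T.Nonempty ∧ T ⊆ Icc 1 m)
    (hFa : IsAntichainFamily F) (hGa : IsAntichainFamily G) :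
    IsAntichainFamily (Kfam m F G) := by
  intro X hX Y hY hXY
  obtain ⟨S, hS, f, hf, rfl⟩ := mem_Kfam.mp hX
  obtain ⟨S', hS', f', hf', rfl⟩ := mem_Kfam.mp hY
  obtain ⟨hfG, hf0⟩ := mem_Funs.mp hf
  obtain ⟨hfG', hf0'⟩ := mem_Funs.mp hf'
  have hS1 : ∀ i ∈ S, 1 ≤ i := fun i hi => (mem_Icc.mp (hF _ hS hi)).1
  have hS1' : ∀ i ∈ S', 1 ≤ i := fun i hi => (mem_Icc.mp (hF _ hS' hi)).1
  have hfb : ∀ i ∈ S, f i ⊆ Icc 1 m := fun i hi => (hG _ (hfG i hi)).2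
  have hfb' : ∀ i ∈ S', f' i ⊆ Icc 1 m := fun i hi => (hG _ (hfG' i hi)).2
  have h1 := build_le hS1 hfb hS1' hfb' (fun i hi => (hG _ (hfG i hi)).1) hXY
  have hSS : S = S' := hFa S hS S' hS' h1.1
  subst hSS
  have hff : f = f' := by
    funext i
    by_cases hi : i ∈ S
    · exact hGa _ (hfG i hi) _ (hfG' i hi) (h1.2 i hi)
    · rw [hf0 i hi, hf0' i hi]
  rw [hff]

lemma osf_Kfam (hF : ∀ S ∈ F, S.Nonempty ∧ S ⊆ Icc 1 n)
    (hG : ∀ T ∈ G, T.Nonempty ∧ T ⊆ Icc 1 m)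
    (hGa : IsAntichainFamily G)
    (hFo : OddSunflowerFree F) (hGo : OddSunflowerFree G) :
    OddSunflowerFree (Kfam m F G) := by
  intro H hH hOS
  obtain ⟨hcard, hXne, hodd⟩ := hOS
  have hch : ∀ X, ∃ S f, X ∈ H → S ∈ F ∧ f ∈ Funs G S ∧ X = build m S f := by
    intro X
    by_cases hX : X ∈ H
    · obtain ⟨S, hS, f, hf, hb⟩ := mem_Kfam.mp (hH hX)
      exact ⟨S, f, fun _ => ⟨hS, hf, hb⟩⟩
    · exact ⟨∅, fun _ => ∅, fun h => absurd h hX⟩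
  choose S f hSf using hch
  have hSF : ∀ X ∈ H, S X ∈ F := fun X hX => (hSf X hX).1
  have hfF : ∀ X ∈ H, f X ∈ Funs G (S X) := fun X hX => (hSf X hX).2.1
  have hXb : ∀ X ∈ H, X = build m (S X) (f X) := fun X hX => (hSf X hX).2.2
  have hS1 : ∀ X ∈ H, ∀ i ∈ S X, 1 ≤ i :=
    fun X hX i hi => (mem_Icc.mp ((hF _ (hSF X hX)).2 hi)).1
  have hfG : ∀ X ∈ H, ∀ i ∈ S X, f X i ∈ G := fun X hX => (mem_Funs.mp (hfF X hX)).1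
  have hf0 : ∀ X ∈ H, ∀ i ∉ S X, f X i = ∅ := fun X hX => (mem_Funs.mp (hfF X hX)).2
  have hfb : ∀ X ∈ H, ∀ i ∈ S X, f X i ⊆ Icc 1 m :=
    fun X hX i hi => (hG _ (hfG X hX i hi)).2
  have hfne : ∀ X ∈ H, ∀ i ∈ S X, (f X i).Nonempty :=
    fun X hX i hi => (hG _ (hfG X hX i hi)).1
  have hmem : ∀ X ∈ H, ∀ i, 1 ≤ i → ∀ j ∈ Icc 1 m,
      (e m i j ∈ X ↔ i ∈ S X ∧ j ∈ f X i) := by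
    intro X hX i hi1 j hj
    have h := mem_build (hS1 X hX) (hfb X hX) (v := e m i j)
    rw [← hXb X hX] at h
    simp only [mem_Icc] at hj
    rw [h, d1_e hi1 hj.1 hj.2, d2_e hi1 hj.1 hj.2]
  have key : ∀ i, 1 ≤ i → (H.filter (fun X => i ∈ S X)).Nonempty →
      ∃ T₀ ∈ G, (∀ X ∈ H.filter (fun X => i ∈ S X), f X i = T₀) ∧
        Odd (H.filter (fun X => i ∈ S X)).card := by
    intro i hi1 hHine
    set Hi := H.filter (fun X => i ∈ S X) with hHi
    have hHiH : ∀ X ∈ Hi, X ∈ H ∧ i ∈ S X := fun X hX => mem_filter.mp hX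
    have hdeg : ∀ j ∈ Icc 1 m,
        (H.filter (fun X => e m i j ∈ X)).card = (Hi.filter (fun X => j ∈ f X i)).card := by
      intro j hj
      rw [hHi, filter_filter]
      congr 1
      apply filter_congr
      intro X hX
      exact hmem X hX i hi1 j hj
    set O := G.filter (fun T => Odd ((Hi.filter (fun X => f X i = T)).card)) with hO
    have hsum : ∀ j ∈ Icc 1 m, (Hi.filter (fun X => j ∈ f X i)).card
        = ∑ T ∈ G.filter (fun T => j ∈ T), (Hi.filter (fun X => f X i = T)).card := by
      intro j hj
      have h1 : ∀ X ∈ Hi.filter (fun X => j ∈ f X i), f X i ∈ G.filter (fun T => j ∈ T) := by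
        intro X hX
        rw [mem_filter] at hX ⊢
        exact ⟨hfG X (hHiH X hX.1).1 i (hHiH X hX.1).2, hX.2⟩
      rw [card_eq_sum_card_fiberwise h1]
      refine sum_congr rfl fun T hT => ?_
      rw [filter_filter]
      congr 1
      apply filter_congr
      intro X hX
      rw [mem_filter] at hT
      constructor
      · rintro ⟨-, h⟩; exact h
      · rintro h; exact ⟨h ▸ hT.2, h⟩
    have hpar : ∀ j ∈ Icc 1 m, (Odd ((Hi.filter (fun X => j ∈ f X i)).card) ↔
        Odd ((O.filter (fun T => j ∈ T)).card)) := by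
      intro j hj
      rw [hsum j hj, Finset.odd_sum_iff_odd_card_odd, hO, filter_comm]
    have hsupO : ∀ X ∈ Hi, ∀ j ∈ f X i,
        j ∈ Icc 1 m ∧ Odd ((O.filter (fun T => j ∈ T)).card) := by
      intro X hXi j hj
      have hXH := (hHiH X hXi).1
      have hiS := (hHiH X hXi).2
      have hjm : j ∈ Icc 1 m := hfb X hXH i hiS hj
      have hin : e m i j ∈ X := (hmem X hXH i hi1 j hjm).mpr ⟨hiS, hj⟩
      have hsup : e m i j ∈ H.sup id := mem_sup.mpr ⟨X, hXH, hin⟩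
      have hd := hodd _ hsup
      rw [hdeg j hjm] at hd
      exact ⟨hjm, (hpar j hjm).mp hd⟩
    have hOsub : O ⊆ G := filter_subset _ _
    have hOmult : ∀ T ∈ O, ∃ X ∈ Hi, f X i = T := by
      intro T hT
      have h2 := (mem_filter.mp hT).2
      obtain ⟨X, hX⟩ := card_pos.mp h2.pos
      exact ⟨X, (mem_filter.mp hX).1, (mem_filter.mp hX).2⟩
    have hOne : O.Nonempty := by
      obtain ⟨X, hXi⟩ := hHine
      obtain ⟨j, hj⟩ := hfne X (hHiH X hXi).1 i (hHiH X hXi).2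
      have h2 := (hsupO X hXi j hj).2
      obtain ⟨T, hT⟩ := card_pos.mp h2.pos
      exact ⟨T, (mem_filter.mp hT).1⟩
    have hO2 : ¬ (2 ≤ O.card) := by
      intro h2
      apply hGo O hOsub
      refine ⟨h2, fun T hT => (hG T (hOsub hT)).1, ?_⟩
      intro j hjsup
      obtain ⟨T, hT, hjT⟩ := mem_sup.mp hjsup
      obtain ⟨X, hXi, hfXT⟩ := hOmult T hT
      exact (hsupO X hXi j (hfXT ▸ hjT)).2
    have hOcard : O.card = 1 := by
      have := hOne.card_pos; omega
    obtain ⟨T₀, hT₀eq⟩ := card_eq_one.mp hOcard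
    have hT₀O : T₀ ∈ O := hT₀eq ▸ mem_singleton_self T₀
    have hT₀G : T₀ ∈ G := hOsub hT₀O
    have hfeq : ∀ X ∈ Hi, f X i = T₀ := by
      intro X hXi
      refine hGa _ (hfG X (hHiH X hXi).1 i (hHiH X hXi).2) _ hT₀G ?_
      intro j hj
      have h2 := (hsupO X hXi j hj).2
      rw [hT₀eq] at h2
      by_contra hjT
      rw [filter_singleton, if_neg hjT] at h2
      simp at h2
    refine ⟨T₀, hT₀G, hfeq, ?_⟩
    have heq : Hi.filter (fun X => f X i = T₀) = Hi := filter_eq_self.mpr hfeq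
    have hoddT := (mem_filter.mp hT₀O).2
    rwa [heq] at hoddT
  have hSinj : ∀ X ∈ H, ∀ Y ∈ H, S X = S Y → X = Y := by
    intro X hX Y hY hSS
    have hfXY : f X = f Y := by
      funext i
      by_cases hi : i ∈ S X
      · have hi1 : 1 ≤ i := hS1 X hX i hi
        have hne : (H.filter (fun Z => i ∈ S Z)).Nonempty := ⟨X, mem_filter.mpr ⟨hX, hi⟩⟩
        obtain ⟨T₀, -, hall, -⟩ := key i hi1 hne
        rw [hall X (mem_filter.mpr ⟨hX, hi⟩), hall Y (mem_filter.mpr ⟨hY, hSS ▸ hi⟩)]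
      · rw [hf0 X hX i hi, hf0 Y hY i (hSS ▸ hi)]
    rw [hXb X hX, hXb Y hY, hSS, hfXY]
  refine hFo (H.image S) ?_ ⟨?_, ?_, ?_⟩
  · intro T hT
    obtain ⟨X, hX, rfl⟩ := mem_image.mp hT
    exact hSF X hX
  · rwa [card_image_of_injOn (fun X hX Y hY => hSinj X hX Y hY)]
  · intro T hT
    obtain ⟨X, hX, rfl⟩ := mem_image.mp hT
    exact (hF _ (hSF X hX)).1
  · intro i hisup
    obtain ⟨T, hT, hiT⟩ := mem_sup.mp hisup
    obtain ⟨X₀, hX₀, rfl⟩ := mem_image.mp hT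
    have hiT : i ∈ S X₀ := hiT
    have hi1 : 1 ≤ i := hS1 X₀ hX₀ i hiT
    have hne : (H.filter (fun Z => i ∈ S Z)).Nonempty := ⟨X₀, mem_filter.mpr ⟨hX₀, hiT⟩⟩
    obtain ⟨T₀, -, -, hoddHi⟩ := key i hi1 hne
    rw [filter_image, card_image_of_injOn
      (fun X hX Y hY h => hSinj X (mem_filter.mp hX).1 Y (mem_filter.mp hY).1 h)]
    exact hoddHi


lemma cfam_card {n : ℕ} (hn : 1 ≤ n) : ((Icc 1 n).powersetCard (n - 1)).card = n := by
  rw [card_powersetCard, Nat.card_Icc]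
  have h : n + 1 - 1 = n := by omega
  rw [h, Nat.choose_symm hn, Nat.choose_one_right]

lemma cfam_osf {n : ℕ} (hn : Odd n) (hn3 : 3 ≤ n) :
    OddSunflowerFree ((Icc 1 n).powersetCard (n - 1)) := by
  rintro H hH ⟨h2, hne, hodd⟩
  have hmem : ∀ S ∈ H, S ⊆ Icc 1 n ∧ S.card = n - 1 :=
    fun S hS => mem_powersetCard.mp (hH hS)
  have hcompl : ∀ S ∈ H, ∀ j, j ∉ S → j ∈ Icc 1 n → S = (Icc 1 n).erase j := by
    intro S hS j hjS hj
    apply eq_of_subset_of_card_le (subset_erase.mpr ⟨(hmem S hS).1, hjS⟩)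
    rw [card_erase_of_mem hj, Nat.card_Icc, (hmem S hS).2]
    omega
  have hsup : ∀ j ∈ Icc 1 n, j ∈ H.sup id := by
    intro j hj
    obtain ⟨S, hS, S', hS', hSS⟩ := one_lt_card.mp (show 1 < H.card by omega)
    by_cases h : j ∈ S
    · exact mem_sup.mpr ⟨S, hS, h⟩
    by_cases h' : j ∈ S'
    · exact mem_sup.mpr ⟨S', hS', h'⟩
    exact absurd ((hcompl S hS j h hj).trans (hcompl S' hS' j h' hj).symm) hSS
  have hdeg : ∀ j ∈ Icc 1 n,
      (H.filter (fun S => j ∈ S)).card =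
        H.card - (if (Icc 1 n).erase j ∈ H then 1 else 0) := by
    intro j hj
    have hsplit : (H.filter (fun S => j ∈ S)).card + (H.filter (fun S => ¬ j ∈ S)).card
        = H.card := card_filter_add_card_filter_not _
    have hneg : H.filter (fun S => ¬ j ∈ S) =
        if (Icc 1 n).erase j ∈ H then {(Icc 1 n).erase j} else ∅ := by
      split_ifs with he
      · apply Subset.antisymm
        · intro S hS
          rw [mem_filter] at hS
          rw [mem_singleton]
          exact hcompl S hS.1 j hS.2 hj
        · intro S hS
          rw [mem_singleton] at hS
          subst hS
          exact mem_filter.mpr ⟨he, notMem_erase j _⟩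
      · ext S
        simp only [mem_filter, notMem_empty, iff_false, not_and]
        intro hS hjS
        exact absurd ((hcompl S hS j hjS hj) ▸ hS) he
    rw [hneg] at hsplit
    split_ifs at hsplit ⊢ with he
    · rw [card_singleton] at hsplit; omega
    · rw [card_empty] at hsplit; omega
  have hHcard : H.card ≤ n := by
    have h := card_le_card hH
    rwa [cfam_card (by omega)] at h
  by_cases hfull : H.card = n
  · have hHF : H = (Icc 1 n).powersetCard (n - 1) :=
      eq_of_subset_of_card_le hH (by rw [cfam_card (by omega)]; omega)
    have h1 : (1 : ℕ) ∈ Icc 1 n := mem_Icc.mpr ⟨le_refl 1, by omega⟩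
    have he : (Icc 1 n).erase 1 ∈ H := by
      rw [hHF]
      refine mem_powersetCard.mpr ⟨erase_subset _ _, ?_⟩
      rw [card_erase_of_mem h1, Nat.card_Icc]
      omega
    have hd := hodd 1 (hsup 1 h1)
    rw [hdeg 1 h1, if_pos he, hfull] at hd
    obtain ⟨a, ha⟩ := hn
    obtain ⟨c, hc⟩ := hd
    omega
  · have hj0 : ∃ j ∈ Icc 1 n, (Icc 1 n).erase j ∉ H := by
      by_contra hcon
      push_neg at hcon
      have hinj : Set.InjOn (fun j => (Icc 1 n).erase j) (Icc 1 n) := by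
        intro j hj j' hj' h
        by_contra hne'
        have h' : (Icc 1 n).erase j = (Icc 1 n).erase j' := h
        have hj'' : j ∈ (Icc 1 n).erase j' := mem_erase.mpr ⟨hne', hj⟩
        rw [← h'] at hj''
        exact (notMem_erase j _) hj''
      have h := card_le_card_of_injOn _ hcon hinj
      rw [Nat.card_Icc] at h
      omega
    obtain ⟨j0, hj0I, hj0H⟩ := hj0
    have hd0 := hodd j0 (hsup j0 hj0I)
    rw [hdeg j0 hj0I, if_neg hj0H] at hd0
    obtain ⟨S, hS⟩ := card_pos.mp (by omega : 0 < H.card)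
    have hss : S ⊂ Icc 1 n := by
      refine (hmem S hS).1.ssubset_of_ne ?_
      intro h
      have h1 := (hmem S hS).2
      rw [h] at h1
      rw [Nat.card_Icc] at h1
      omega
    obtain ⟨j1, hj1I, hj1S⟩ := exists_of_ssubset hss
    have hS' : S = (Icc 1 n).erase j1 := hcompl S hS j1 hj1S hj1I
    have he1 : (Icc 1 n).erase j1 ∈ H := hS' ▸ hS
    have hd1 := hodd j1 (hsup j1 hj1I)
    rw [hdeg j1 hj1I, if_pos he1] at hd1
    obtain ⟨a, ha⟩ := hd0
    obtain ⟨c, hc⟩ := hd1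
    omega

lemma cfam_antichain {n : ℕ} : IsAntichainFamily ((Icc 1 n).powersetCard (n - 1)) := by
  intro S hS T hT hST
  apply eq_of_subset_of_card_le hST
  rw [(mem_powersetCard.mp hS).2, (mem_powersetCard.mp hT).2]

lemma part1 : ∀ (n m k b : ℕ) (F : Finset (Finset ℕ)),
    (∀ S ∈ F, S.Nonempty ∧ S.card = k ∧ S ⊆ Finset.Icc 1 n) →
    IsAntichainFamily F → OddSunflowerFree F →
    (∃ G : Finset (Finset ℕ), (∀ S ∈ G, S.Nonempty ∧ S ⊆ Finset.Icc 1 m) ∧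
      IsAntichainFamily G ∧ OddSunflowerFree G ∧ G.card = b) →
    ∃ K : Finset (Finset ℕ), (∀ S ∈ K, S.Nonempty ∧ S ⊆ Finset.Icc 1 (n * m)) ∧
      IsAntichainFamily K ∧ OddSunflowerFree K ∧ K.card = F.card * b ^ k := by
  rintro n m k b F hF hFa hFo ⟨G, hG, hGa, hGo, hGb⟩
  refine ⟨Kfam m F G,
    props_Kfam (fun S hS => ⟨(hF S hS).1, (hF S hS).2.2⟩) hG,
    antichain_Kfam (fun S hS => (hF S hS).2.2) hG hFa hGa,
    osf_Kfam (fun S hS => ⟨(hF S hS).1, (hF S hS).2.2⟩) hG hGa hFo hGo, ?_⟩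
  rw [card_Kfam (fun S hS => (hF S hS).2.2) (fun T hT => (hG T hT).1)
    (fun T hT => (hG T hT).2), ← hGb]
  rw [sum_congr rfl (fun S hS => by rw [(hF S hS).2.1] : ∀ S ∈ F, G.card ^ S.card = G.card ^ k)]
  rw [sum_const, smul_eq_mul]


end WC

/-- Corollary of Lemma 6: from a `k`-uniform odd-sunflower-free antichain `F` of (nonempty)
subsets of an `n`-element set and an odd-sunflower-free antichain of `b` nonempty subsets
of an `m`-element set, one obtains an odd-sunflower-free antichain of `|F| · b^k` nonempty
subsets of an `(n·m)`-element set.  In particular, for every odd `n ≥ 3` one obtains one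
with `n · b^(n-1)` members. -/
theorem wreath_corollary :
    (∀ (n m k b : ℕ) (F : Finset (Finset ℕ)),
      (∀ S ∈ F, S.Nonempty ∧ S.card = k ∧ S ⊆ Finset.Icc 1 n) →
      IsAntichainFamily F → OddSunflowerFree F →
      (∃ G : Finset (Finset ℕ), (∀ S ∈ G, S.Nonempty ∧ S ⊆ Finset.Icc 1 m) ∧
        IsAntichainFamily G ∧ OddSunflowerFree G ∧ G.card = b) →
      ∃ K : Finset (Finset ℕ), (∀ S ∈ K, S.Nonempty ∧ S ⊆ Finset.Icc 1 (n * m)) ∧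
        IsAntichainFamily K ∧ OddSunflowerFree K ∧ K.card = F.card * b ^ k) ∧
    (∀ n m b : ℕ, Odd n → 3 ≤ n →
      (∃ G : Finset (Finset ℕ), (∀ S ∈ G, S.Nonempty ∧ S ⊆ Finset.Icc 1 m) ∧
        IsAntichainFamily G ∧ OddSunflowerFree G ∧ G.card = b) →
      ∃ K : Finset (Finset ℕ), (∀ S ∈ K, S.Nonempty ∧ S ⊆ Finset.Icc 1 (n * m)) ∧
        IsAntichainFamily K ∧ OddSunflowerFree K ∧ K.card = n * b ^ (n - 1)) := by
  refine ⟨WC.part1, ?_⟩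
  rintro n m b hn hn3 hG
  have hF : ∀ S ∈ (Finset.Icc 1 n).powersetCard (n - 1),
      S.Nonempty ∧ S.card = n - 1 ∧ S ⊆ Finset.Icc 1 n := by
    intro S hS
    obtain ⟨h1, hc⟩ := Finset.mem_powersetCard.mp hS
    exact ⟨Finset.card_pos.mp (by omega), hc, h1⟩
  obtain ⟨K, hK1, hK2, hK3, hK4⟩ :=
    WC.part1 n m (n - 1) b _ hF WC.cfam_antichain (WC.cfam_osf hn hn3) hG
  exact ⟨K, hK1, hK2, hK3, by rw [hK4, WC.cfam_card (by omega)]⟩
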